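/- Legendre product coefficients recurrence: let y = Σ c_k P_k be a formal Legendre series and h_{i,j} the coefficient of P_i in the Legendre expansion of P_j·y. Then h_{i,0} = c_i, h_{0,j} = c_j/(2j+1), h_{i,1} = ((i+1)/(2i+3))c_{i+1} + (i/(2i−1))c_{i−1} for i ≥ 1, and h_{i,j+1} = ((2j+1)/(j+1))·[((i+1)/(2i+3))h_{i+1,j} + (i/(2i−1))h_{i−1,j}] − (j/(j+1))h_{i,j−1} for i,j ≥ 1. -/

import Mathlib

open Polynomial intervalIntegral

/-- Legendre polynomials (Rodrigues' formula), normalized so that `P n 1 = 1`. -/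
noncomputable def legendreP (n : ℕ) : Polynomial ℝ :=
  Polynomial.C (1 / (2 ^ n * (n.factorial : ℝ))) *
    (Polynomial.derivative^[n] ((Polynomial.X ^ 2 - 1) ^ n))

/-- The coefficient of `Pᵢ` in the formal Legendre expansion of `Pⱼ · Σₖ cₖ Pₖ`, computed
from the `L²(−1,1)` linearization coefficients (only `k ≤ i + j` contribute). -/
noncomputable def legProdCoeff (c : ℕ → ℝ) (i j : ℕ) : ℝ :=
  ∑ k ∈ Finset.range (i + j + 1),
    c k * ((2 * (i : ℝ) + 1) / 2) *
      ∫ t in (-1 : ℝ)..1, (legendreP i).eval t * (legendreP j).eval t * (legendreP k).eval t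

namespace Leg


/-- abbreviation -/
noncomputable def U (n : ℕ) : Polynomial ℝ := (X ^ 2 - 1) ^ n

lemma natDegree_U (n : ℕ) : (U n).natDegree = 2 * n := by
  unfold U
  have h : (X ^ 2 - 1 : Polynomial ℝ).natDegree = 2 := by
    compute_degree!
  rw [natDegree_pow, h, mul_comm]

lemma coeff_U (n : ℕ) : (U n).coeff (2 * n) = 1 := by
  have h1 : (U n).Monic := by
    apply Monic.pow
    have : (X ^ 2 - 1 : Polynomial ℝ) = X ^ 2 + (-1 : ℝ[X]) := by ring
    rw [this]
    apply monic_X_pow_add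
    simpa using (natDegree_neg (1 : ℝ[X])) ▸ (by simp : (-1 : ℝ[X]).natDegree ≤ 1)
  have := h1.leadingCoeff
  rwa [leadingCoeff, natDegree_U] at this

lemma natDegree_legendreP_le (n : ℕ) : (legendreP n).natDegree ≤ n := by
  unfold legendreP
  refine (natDegree_mul_le).trans ?_
  simp only [natDegree_C, zero_add]
  refine (natDegree_iterate_derivative _ _).trans ?_
  rw [show ((X:ℝ[X]) ^ 2 - 1) ^ n = U n from rfl, natDegree_U]
  omega

/-- leading coefficient value -/
noncomputable def L (n : ℕ) : ℝ := (2 * n).factorial / (2 ^ n * (n.factorial : ℝ) ^ 2)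

lemma L_pos (n : ℕ) : 0 < L n := by
  unfold L
  positivity

lemma coeff_legendreP (n : ℕ) : (legendreP n).coeff n = L n := by
  unfold legendreP
  rw [coeff_C_mul, Polynomial.coeff_iterate_derivative]
  rw [show ((X:ℝ[X]) ^ 2 - 1) ^ n = U n from rfl]
  have h2 : n + n = 2 * n := by omega
  rw [h2, coeff_U]
  rw [Nat.descFactorial_eq_div (by omega : n ≤ 2 * n)]
  have : 2 * n - n = n := by omega
  rw [this]
  have hfac : ((2 * n).factorial / n.factorial : ℕ) = ((2*n).factorial : ℝ) / (n.factorial : ℝ) := by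
    rw [Nat.cast_div (Nat.factorial_dvd_factorial (by omega)) (by positivity)]
  rw [nsmul_eq_mul, hfac]
  unfold L
  rw [mul_one, eq_div_iff (by positivity)]
  field_simp



/-- iterated derivatives of U keep a factor (X²−1)^(n−m) -/
lemma iterate_derivative_U_dvd (n m : ℕ) (hm : m ≤ n) :
    ∃ q : ℝ[X], derivative^[m] (U n) = (X ^ 2 - 1) ^ (n - m) * q := by
  induction m with
  | zero => exact ⟨1, by simp [U]⟩
  | succ m ih =>
    obtain ⟨q, hq⟩ := ih (by omega)
    refine ⟨(C (((n - (m+1) : ℕ) : ℝ) + 1)) * (2 * X) * q + (X ^ 2 - 1) * derivative q, ?_⟩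
    rw [Function.iterate_succ_apply', hq]
    have hnm : n - m = (n - (m+1)) + 1 := by omega
    rw [derivative_mul, derivative_pow, hnm]
    simp only [derivative_sub, derivative_one, derivative_X_pow]
    push_cast
    rw [show (C (2:ℝ)) = (2:ℝ[X]) from map_ofNat C 2]
    ring

lemma eval_iterate_derivative_U_eq_zero (n m : ℕ) (hm : m < n) {x : ℝ} (hx : x ^ 2 = 1) :
    (derivative^[m] (U n)).eval x = 0 := by
  obtain ⟨q, hq⟩ := iterate_derivative_U_dvd n m (le_of_lt hm)
  rw [hq]
  simp only [eval_mul, eval_pow, eval_sub, eval_one, eval_X]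
  rw [hx]
  simp [Nat.sub_ne_zero_of_lt hm]

/-- polynomial integration by parts on [-1,1] -/
lemma poly_ibp (p q : ℝ[X]) :
    ∫ x in (-1:ℝ)..1, (derivative p).eval x * q.eval x + p.eval x * (derivative q).eval x
      = p.eval 1 * q.eval 1 - p.eval (-1) * q.eval (-1) := by
  apply integral_deriv_mul_eq_sub
  · intro x _; exact p.hasDerivAt x
  · intro x _; exact q.hasDerivAt x
  · exact ((derivative p).continuous).intervalIntegrable _ _
  · exact ((derivative q).continuous).intervalIntegrable _ _

lemma integrable_eval (p : ℝ[X]) : IntervalIntegrable (fun x => p.eval x) MeasureTheory.volume (-1:ℝ) 1 :=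
  (p.continuous).intervalIntegrable _ _

/-- iterated IBP against derivatives of U -/
lemma iterated_ibp (n : ℕ) : ∀ m ≤ n, ∀ q : ℝ[X],
    ∫ x in (-1:ℝ)..1, q.eval x * (derivative^[m] (U n)).eval x
      = (-1:ℝ)^m * ∫ x in (-1:ℝ)..1, (derivative^[m] q).eval x * (U n).eval x := by
  intro m
  induction m with
  | zero => intro _ q; simp
  | succ m ih =>
    intro hm q
    have key := poly_ibp q (derivative^[m] (U n))
    rw [eval_iterate_derivative_U_eq_zero n m (by omega) (by norm_num),
        eval_iterate_derivative_U_eq_zero n m (by omega) (by norm_num)] at key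
    simp only [mul_zero, sub_zero] at key
    have hsplit : ∫ x in (-1:ℝ)..1,
        (derivative q).eval x * (derivative^[m] (U n)).eval x
          + q.eval x * (derivative (derivative^[m] (U n))).eval x
        = (∫ x in (-1:ℝ)..1, (derivative q).eval x * (derivative^[m] (U n)).eval x)
          + ∫ x in (-1:ℝ)..1, q.eval x * (derivative (derivative^[m] (U n))).eval x := by
      apply integral_add
      · exact ((((derivative q).continuous).mul ((derivative^[m] (U n)).continuous))).intervalIntegrable _ _
      · exact (((q.continuous).mul ((derivative (derivative^[m] (U n))).continuous))).intervalIntegrable _ _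
    rw [hsplit] at key
    rw [show derivative (derivative^[m] (U n)) = derivative^[m+1] (U n) by
      rw [Function.iterate_succ_apply']] at key
    have : ∫ x in (-1:ℝ)..1, q.eval x * (derivative^[m+1] (U n)).eval x
        = - ∫ x in (-1:ℝ)..1, (derivative q).eval x * (derivative^[m] (U n)).eval x := by
      linarith
    rw [this, ih (by omega) (derivative q)]
    rw [show derivative^[m] (derivative q) = derivative^[m+1] q by
      rw [← Function.iterate_succ_apply]]
    ring



/-- integral of eval of a polynomial product rewrite helper: ∫ q·Pₙ = 0 if deg q < n -/
lemma orth_low {q : ℝ[X]} {n : ℕ} (h : q.natDegree < n) :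
    ∫ x in (-1:ℝ)..1, q.eval x * (legendreP n).eval x = 0 := by
  have : ∀ x : ℝ, q.eval x * (legendreP n).eval x
      = (1 / (2 ^ n * (n.factorial : ℝ))) * (q.eval x * (derivative^[n] (U n)).eval x) := by
    intro x; simp only [legendreP, eval_mul, eval_C]; show _ = _ * (_ * (derivative^[n] ((X^2-1)^n)).eval x); ring
  rw [intervalIntegral.integral_congr (g := fun x => (1 / (2 ^ n * (n.factorial : ℝ))) * (q.eval x * (derivative^[n] (U n)).eval x)) (fun x _ => this x)]
  rw [intervalIntegral.integral_const_mul, iterated_ibp n n le_rfl q,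
      Polynomial.iterate_derivative_eq_zero h]
  simp

/-- the polynomial (1-X²)^n and its integral Jₙ -/
noncomputable def V (n : ℕ) : Polynomial ℝ := (1 - X ^ 2) ^ n
noncomputable def J (n : ℕ) : ℝ := ∫ x in (-1:ℝ)..1, (V n).eval x

lemma J_succ (n : ℕ) : (2*(n:ℝ)+3) * J (n+1) = (2*(n:ℝ)+2) * J n := by
  have hb := poly_ibp X (V (n+1))
  have hV1 : (V (n+1)).eval 1 = 0 := by simp [V]
  have hVm1 : (V (n+1)).eval (-1) = 0 := by simp [V]
  rw [hV1, hVm1] at hb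
  simp only [mul_zero, sub_zero] at hb
  have hid : ∀ x : ℝ, (derivative (X:ℝ[X])).eval x * (V (n+1)).eval x
      + (X:ℝ[X]).eval x * (derivative (V (n+1))).eval x
      = (2*(n:ℝ)+3) * (V (n+1)).eval x - (2*(n:ℝ)+2) * (V n).eval x := by
    intro x
    have hd : derivative (V (n+1)) = C (((n:ℝ)+1)) * (1 - X^2)^n * (-(2*X)) := by
      unfold V
      rw [derivative_pow]
      push_cast
      simp only [derivative_sub, derivative_one, derivative_X_pow, Nat.cast_ofNat, map_ofNat]
      push_cast
      ring
    rw [hd]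
    simp only [eval_mul, eval_C, eval_neg, eval_X, derivative_X, eval_one, V, eval_pow,
      eval_sub, eval_ofNat]
    ring
  rw [intervalIntegral.integral_congr
    (g := fun x => (2*(n:ℝ)+3) * (V (n+1)).eval x - (2*(n:ℝ)+2) * (V n).eval x)
    (fun x _ => hid x)] at hb
  rw [intervalIntegral.integral_sub
      ((continuous_const.fun_mul (V (n+1)).continuous).intervalIntegrable _ _)
      ((continuous_const.fun_mul (V n).continuous).intervalIntegrable _ _),
    intervalIntegral.integral_const_mul, intervalIntegral.integral_const_mul] at hb
  unfold J
  linarith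

lemma J_eq (n : ℕ) : J n = 2^(2*n+1) * ((n.factorial:ℝ))^2 / ((2*n+1).factorial) := by
  induction n with
  | zero => norm_num [J, V]
  | succ n ih =>
    have h := J_succ n
    rw [ih] at h
    have h1 : (0:ℝ) < 2*(n:ℝ)+3 := by positivity
    have e1 : ((2*(n+1)+1).factorial : ℝ) = (2*(n:ℝ)+3) * (2*(n:ℝ)+2) * ((2*n+1).factorial:ℝ) := by
      have : 2*(n+1)+1 = (2*n+1) + 1 + 1 := by omega
      rw [this, Nat.factorial_succ, Nat.factorial_succ]
      push_cast
      ring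
    have e2 : (((n+1).factorial:ℝ)) = ((n:ℝ)+1) * (n.factorial:ℝ) := by
      rw [Nat.factorial_succ]; push_cast; ring
    have hfac : (0:ℝ) < ((2*n+1).factorial:ℝ) := by positivity
    have e3 : (2:ℝ)^(2*(n+1)+1) = 2^(2*n+1) * 4 := by
      rw [show 2*(n+1)+1 = (2*n+1)+2 by omega, pow_add]; norm_num
    field_simp at h
    rw [e1, e2, e3, eq_div_iff (by positivity)]
    linear_combination (2*(n:ℝ)+2) * h



lemma iterate_derivative_legendreP (n : ℕ) :
    derivative^[n] (legendreP n) = C ((n.factorial : ℝ) * L n) := by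
  have h1 : (derivative^[n] (legendreP n)).natDegree = 0 := by
    have := Polynomial.natDegree_iterate_derivative (legendreP n) n
    have h2 := natDegree_legendreP_le n
    omega
  have h0 : (derivative^[n] (legendreP n)).coeff 0 = (n.factorial : ℝ) * L n := by
    rw [Polynomial.coeff_iterate_derivative, zero_add, Nat.descFactorial_self,
      coeff_legendreP, nsmul_eq_mul]
  rw [Polynomial.eq_C_of_natDegree_le_zero (le_of_eq h1), h0]

lemma integral_U (n : ℕ) : ∫ x in (-1:ℝ)..1, (U n).eval x = (-1:ℝ)^n * J n := by
  unfold J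
  rw [← intervalIntegral.integral_const_mul]
  apply intervalIntegral.integral_congr
  intro x _
  simp only [U, V, eval_pow, eval_sub, eval_one, eval_X]
  rw [show (x^2 - 1 : ℝ) = (-1) * (1 - x^2) by ring, mul_pow]

lemma norm_legendreP (n : ℕ) :
    ∫ x in (-1:ℝ)..1, (legendreP n).eval x * (legendreP n).eval x = 2 / (2*(n:ℝ)+1) := by
  have key : ∀ x : ℝ, (legendreP n).eval x * (legendreP n).eval x
      = (1 / (2 ^ n * (n.factorial : ℝ))) * ((legendreP n).eval x * (derivative^[n] (U n)).eval x) := by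
    intro x
    have hP : (legendreP n).eval x
        = (1 / (2 ^ n * (n.factorial : ℝ))) * (derivative^[n] (U n)).eval x := by
      simp [legendreP, U]
    rw [hP]; ring
  rw [intervalIntegral.integral_congr (g := fun x => (1 / (2 ^ n * (n.factorial : ℝ))) *
    ((legendreP n).eval x * (derivative^[n] (U n)).eval x)) (fun x _ => key x)]
  rw [intervalIntegral.integral_const_mul, iterated_ibp n n le_rfl (legendreP n),
    iterate_derivative_legendreP]
  have : ∫ x in (-1:ℝ)..1, (C ((n.factorial : ℝ) * L n)).eval x * (U n).eval x
      = ((n.factorial : ℝ) * L n) * ∫ x in (-1:ℝ)..1, (U n).eval x := by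
    rw [← intervalIntegral.integral_const_mul]
    apply intervalIntegral.integral_congr
    intro x _; simp
  rw [this, integral_U, J_eq]
  unfold L
  have e1 : ((2*n+1).factorial : ℝ) = (2*(n:ℝ)+1) * ((2*n).factorial:ℝ) := by
    rw [Nat.factorial_succ]; push_cast; ring
  have h1 : (0:ℝ) < (n.factorial:ℝ) := by positivity
  have h2 : (0:ℝ) < ((2*n).factorial:ℝ) := by positivity
  have h3 : (0:ℝ) < 2*(n:ℝ)+1 := by positivity
  have e4 : (2:ℝ)^(2*n+1) = 2^n * 2^n * 2 := by rw [pow_add, two_mul, pow_add]; ring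
  have hmm : ((-1:ℝ))^(n*2) = 1 := by rw [mul_comm, pow_mul]; norm_num
  field_simp [e1, e4]
  rw [e1, e4, ← pow_mul (-1 : ℝ)]
  rw [hmm]
  ring

lemma orth_ne {a b : ℕ} (h : a ≠ b) :
    ∫ x in (-1:ℝ)..1, (legendreP a).eval x * (legendreP b).eval x = 0 := by
  rcases Nat.lt_or_ge a b with hab | hab
  · exact orth_low (lt_of_le_of_lt (natDegree_legendreP_le a) hab)
  · have hba : b < a := by omega
    rw [intervalIntegral.integral_congr (g := fun x => (legendreP b).eval x * (legendreP a).eval x)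
      (fun x _ => by ring)]
    exact orth_low (lt_of_le_of_lt (natDegree_legendreP_le b) hba)

lemma parity_aux (m : ℕ) (p : ℝ[X]) :
    derivative^[m] (p.comp (-X)) = (-1:ℝ[X])^m * (derivative^[m] p).comp (-X) := by
  induction m with
  | zero => simp
  | succ m ih =>
    rw [Function.iterate_succ_apply', ih, derivative_mul, Function.iterate_succ_apply']
    have hd : derivative ((-1:ℝ[X])^m) = 0 := by
      rw [show ((-1:ℝ[X])^m) = C ((-1:ℝ)^m) by simp, derivative_C]
    rw [Polynomial.derivative_comp, hd]
    simp only [zero_mul, zero_add, derivative_neg, derivative_X]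
    rw [pow_succ]
    ring


lemma legP_zero : legendreP 0 = 1 := by simp [legendreP]

lemma eval_legendreP_neg (n : ℕ) (x : ℝ) :
    (legendreP n).eval (-x) = (-1:ℝ)^n * (legendreP n).eval x := by
  have hU : (U n).comp (-X) = U n := by
    unfold U
    rw [pow_comp, sub_comp, pow_comp, X_comp, one_comp, neg_pow, neg_one_sq, one_mul]
  have h := parity_aux n (U n)
  rw [hU] at h
  -- h : D^n (U n) = (-1)^n * (D^n U n).comp (-X)
  have h2 : (derivative^[n] (U n)).comp (-X) = (-1:ℝ[X])^n * derivative^[n] (U n) := by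
    have hsq : ((-1:ℝ[X])^n) * ((-1:ℝ[X])^n) = 1 := by
      rw [← pow_add]; exact Even.neg_one_pow ⟨_, rfl⟩
    calc (derivative^[n] (U n)).comp (-X)
        = 1 * (derivative^[n] (U n)).comp (-X) := by ring
      _ = (-1:ℝ[X])^n * ((-1:ℝ[X])^n * (derivative^[n] (U n)).comp (-X)) := by
          rw [← mul_assoc, hsq]
      _ = (-1:ℝ[X])^n * derivative^[n] (U n) := by rw [← h]
  have : (legendreP n).eval (-x) = ((legendreP n).comp (-X)).eval x := by
    rw [eval_comp]; simp
  rw [this]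
  unfold legendreP
  rw [mul_comp, C_comp]
  rw [show ((derivative^[n] ((X^2-1)^n) : ℝ[X])) = derivative^[n] (U n) from rfl, h2]
  simp only [eval_mul, eval_C, eval_pow, eval_neg, eval_one]
  ring

lemma int_x_sq (i : ℕ) :
    ∫ x in (-1:ℝ)..1, x * ((legendreP i).eval x * (legendreP i).eval x) = 0 := by
  set f : ℝ → ℝ := fun x => x * ((legendreP i).eval x * (legendreP i).eval x) with hf
  have h1 : ∫ x in (-1:ℝ)..1, f (-x) = ∫ x in (-1:ℝ)..1, f x := by
    rw [intervalIntegral.integral_comp_neg f]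
    norm_num
  have h2 : ∀ x, f (-x) = - f x := by
    intro x
    simp only [hf]
    rw [eval_legendreP_neg]
    have hsq : ((-1:ℝ)^i) * ((-1:ℝ)^i) = 1 := by
      rw [← pow_add]; exact Even.neg_one_pow ⟨_, rfl⟩
    calc -x * ((-1:ℝ)^i * (legendreP i).eval x * ((-1:ℝ)^i * (legendreP i).eval x))
        = -(((-1:ℝ)^i) * ((-1:ℝ)^i)) * (x * ((legendreP i).eval x * (legendreP i).eval x)) := by ring
      _ = - (x * ((legendreP i).eval x * (legendreP i).eval x)) := by rw [hsq]; ring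
  rw [intervalIntegral.integral_congr (g := fun x => - f x) (fun x _ => h2 x)] at h1
  rw [intervalIntegral.integral_neg] at h1
  linarith

lemma span_all (p : ℝ[X]) : p ∈ Submodule.span ℝ (Set.range legendreP) := by
  suffices h : ∀ n : ℕ, ∀ p : ℝ[X], p.natDegree ≤ n → p ∈ Submodule.span ℝ (Set.range legendreP) by
    exact h p.natDegree p le_rfl
  intro n
  induction n with
  | zero =>
    intro p hp
    rw [Polynomial.eq_C_of_natDegree_le_zero hp]
    have : C (p.coeff 0) = (p.coeff 0) • legendreP 0 := by
      rw [legP_zero, smul_eq_C_mul, mul_one]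
    rw [this]
    exact Submodule.smul_mem _ _ (Submodule.subset_span ⟨0, rfl⟩)
  | succ n ih =>
    intro p hp
    set q := p - C (p.coeff (n+1) / L (n+1)) * legendreP (n+1) with hq
    have hco : q.coeff (n+1) = 0 := by
      rw [hq]
      simp only [coeff_sub, coeff_C_mul, coeff_legendreP]
      field_simp [(L_pos (n+1)).ne']
      ring
    have hdeg : q.natDegree ≤ n := by
      rw [Polynomial.natDegree_le_iff_coeff_eq_zero]
      intro N hN
      rcases Nat.lt_or_ge (n+1) N with h1 | h1
      · rw [hq]
        simp only [coeff_sub, coeff_C_mul]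
        rw [Polynomial.coeff_eq_zero_of_natDegree_lt (lt_of_le_of_lt hp h1),
          Polynomial.coeff_eq_zero_of_natDegree_lt
            (lt_of_le_of_lt (natDegree_legendreP_le (n+1)) h1)]
        ring
      · have : N = n + 1 := by omega
        rw [this, hco]
    have : p = q + C (p.coeff (n+1) / L (n+1)) * legendreP (n+1) := by rw [hq]; ring
    rw [this]
    refine Submodule.add_mem _ (ih q hdeg) ?_
    rw [← smul_eq_C_mul]
    exact Submodule.smul_mem _ _ (Submodule.subset_span ⟨n+1, rfl⟩)

lemma L_ratio (i : ℕ) : L i / L (i+1) = ((i:ℝ)+1)/(2*(i:ℝ)+1) := by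
  unfold L
  have e1 : ((2*(i+1)).factorial : ℝ) = (2*(i:ℝ)+2) * (2*(i:ℝ)+1) * ((2*i).factorial:ℝ) := by
    rw [show 2*(i+1) = (2*i+1)+1 by omega, Nat.factorial_succ,
      show 2*i+1 = (2*i)+1 by omega, Nat.factorial_succ]
    push_cast; ring
  have e2 : (((i+1).factorial:ℝ)) = ((i:ℝ)+1) * (i.factorial:ℝ) := by
    rw [Nat.factorial_succ]; push_cast; ring
  have h1 : (0:ℝ) < (i.factorial:ℝ) := by positivity
  have h2 : (0:ℝ) < ((2*i).factorial:ℝ) := by positivity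
  rw [e1, e2, pow_succ]
  field_simp
  ring

/-- ∫ x·Pᵢ·Pᵢ₊₁ = (Lᵢ/Lᵢ₊₁)·(2/(2i+3)) -/
lemma int_xPP_succ (i : ℕ) :
    ∫ x in (-1:ℝ)..1, x * ((legendreP i).eval x * (legendreP (i+1)).eval x)
      = (((i:ℝ)+1)/(2*(i:ℝ)+1)) * (2/(2*(i:ℝ)+3)) := by
  set cc : ℝ := L i / L (i+1) with hcc
  set D : ℝ[X] := X * legendreP i - C cc * legendreP (i+1) with hD
  have hcoD : D.coeff (i+1) = 0 := by
    rw [hD]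
    simp only [coeff_sub, coeff_C_mul, coeff_legendreP, Polynomial.coeff_X_mul, coeff_legendreP]
    rw [hcc]
    field_simp [(L_pos (i+1)).ne']
    ring
  have hdegD : D.natDegree ≤ i := by
    rw [Polynomial.natDegree_le_iff_coeff_eq_zero]
    intro N hN
    rcases Nat.lt_or_ge (i+1) N with h1 | h1
    · rw [hD]
      simp only [coeff_sub, coeff_C_mul]
      have hXP : (X * legendreP i).natDegree < N := by
        refine lt_of_le_of_lt (natDegree_mul_le.trans ?_) h1
        simp [natDegree_X_le]
        have := natDegree_legendreP_le i
        omega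
      rw [Polynomial.coeff_eq_zero_of_natDegree_lt hXP,
        Polynomial.coeff_eq_zero_of_natDegree_lt
          (lt_of_le_of_lt (natDegree_legendreP_le (i+1)) h1)]
      ring
    · have : N = i + 1 := by omega
      rw [this, hcoD]
  have horth := orth_low (n := i+1) (q := D) (by omega)
  have hsplit : ∀ x : ℝ, D.eval x * (legendreP (i+1)).eval x
      = x * ((legendreP i).eval x * (legendreP (i+1)).eval x)
        - cc * ((legendreP (i+1)).eval x * (legendreP (i+1)).eval x) := by
    intro x; rw [hD]; simp only [eval_sub, eval_mul, eval_C, eval_X]; ring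
  rw [intervalIntegral.integral_congr (g := fun x =>
      x * ((legendreP i).eval x * (legendreP (i+1)).eval x)
        - cc * ((legendreP (i+1)).eval x * (legendreP (i+1)).eval x))
    (fun x _ => hsplit x)] at horth
  rw [intervalIntegral.integral_sub
      ((continuous_id'.fun_mul ((legendreP i).continuous.fun_mul (legendreP (i+1)).continuous)).intervalIntegrable _ _)
      ((continuous_const.fun_mul ((legendreP (i+1)).continuous.fun_mul (legendreP (i+1)).continuous)).intervalIntegrable _ _),
    intervalIntegral.integral_const_mul, norm_legendreP] at horth
  push_cast at horth
  have : ∫ x in (-1:ℝ)..1, x * ((legendreP i).eval x * (legendreP (i+1)).eval x)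
      = cc * (2 / (2*((i:ℕ)+1:ℝ)+1)) := by push_cast; linarith
  rw [this, hcc, L_ratio]
  push_cast
  ring_nf

/-- Bonnet three-term recurrence -/
lemma bonnet (i : ℕ) (hi : 1 ≤ i) :
    X * legendreP i = C (((i:ℝ)+1)/(2*(i:ℝ)+1)) * legendreP (i+1)
      + C ((i:ℝ)/(2*(i:ℝ)+1)) * legendreP (i-1) := by
  set a : ℝ := ((i:ℝ)+1)/(2*(i:ℝ)+1) with ha
  set b : ℝ := (i:ℝ)/(2*(i:ℝ)+1) with hb
  set R : ℝ[X] := X * legendreP i - C a * legendreP (i+1) - C b * legendreP (i-1) with hR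
  have hRint : ∀ m : ℕ, ∫ x in (-1:ℝ)..1, R.eval x * (legendreP m).eval x = 0 := by
    intro m
    have hsplit : ∀ x : ℝ, R.eval x * (legendreP m).eval x
        = x * ((legendreP i).eval x * (legendreP m).eval x)
          - a * ((legendreP (i+1)).eval x * (legendreP m).eval x)
          - b * ((legendreP (i-1)).eval x * (legendreP m).eval x) := by
      intro x; rw [hR]; simp only [eval_sub, eval_mul, eval_C, eval_X]; ring
    rw [intervalIntegral.integral_congr (g := fun x =>
        x * ((legendreP i).eval x * (legendreP m).eval x)
          - a * ((legendreP (i+1)).eval x * (legendreP m).eval x)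
          - b * ((legendreP (i-1)).eval x * (legendreP m).eval x))
      (fun x _ => hsplit x)]
    rw [intervalIntegral.integral_sub, intervalIntegral.integral_sub,
      intervalIntegral.integral_const_mul, intervalIntegral.integral_const_mul]
    rotate_left
    · exact (continuous_id'.mul ((legendreP i).continuous.mul (legendreP m).continuous)).intervalIntegrable _ _
    · exact (continuous_const.mul ((legendreP (i+1)).continuous.mul (legendreP m).continuous)).intervalIntegrable _ _
    · exact ((continuous_id'.mul ((legendreP i).continuous.mul (legendreP m).continuous)).sub
        (continuous_const.mul ((legendreP (i+1)).continuous.mul (legendreP m).continuous))).intervalIntegrable _ _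
    · exact (continuous_const.mul ((legendreP (i-1)).continuous.mul (legendreP m).continuous)).intervalIntegrable _ _
    -- now case on m
    rcases eq_or_ne m (i+1) with rfl | hm1
    · rw [int_xPP_succ, norm_legendreP, orth_ne (by omega : i-1 ≠ i+1)]
      push_cast
      ring
    rcases eq_or_ne m (i-1) with rfl | hm2
    · have hi1 : i - 1 + 1 = i := by omega
      have hx : ∫ x in (-1:ℝ)..1, x * ((legendreP i).eval x * (legendreP (i-1)).eval x)
          = (((i:ℝ)-1)+1)/(2*((i:ℝ)-1)+1) * (2/(2*((i:ℝ)-1)+3)) := by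
        have h0 := int_xPP_succ (i-1)
        rw [hi1] at h0
        rw [intervalIntegral.integral_congr
            (f := fun x => x * ((legendreP i).eval x * (legendreP (i-1)).eval x))
            (g := fun x => x * ((legendreP (i-1)).eval x * (legendreP i).eval x))
            (fun x _ => by ring)]
        rw [h0]
        have : ((i-1:ℕ):ℝ) = (i:ℝ) - 1 := by
          have : (1:ℕ) ≤ i := hi
          push_cast [Nat.cast_sub this]
          ring
        rw [this]
      rw [hx, orth_ne (by omega : i+1 ≠ i-1), norm_legendreP]
      have hc : ((i-1:ℕ):ℝ) = (i:ℝ) - 1 := by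
        push_cast [Nat.cast_sub hi]; ring
      rw [hc, hb, ha]
      have h1 : (2*((i:ℝ)-1)+1) ≠ 0 := by
        have : (1:ℝ) ≤ (i:ℝ) := by exact_mod_cast hi
        nlinarith
      have h2 : (2*(i:ℝ)+1) ≠ 0 := by positivity
      have h3 : (2*(i:ℝ)-1) ≠ 0 := by nlinarith
      rw [show (2*((i:ℝ)-1)+1) = 2*(i:ℝ)-1 by ring, show (2*((i:ℝ)-1)+3) = 2*(i:ℝ)+1 by ring]
      field_simp
      have hge1 : (1:ℝ) ≤ (i:ℝ) := by exact_mod_cast hi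
      have h4 : (-1 + (i:ℝ)^2*4) ≠ 0 := by nlinarith
      ring
    rcases eq_or_ne m i with hmi | hm3
    · rw [hmi, int_x_sq, orth_ne (by omega : i+1 ≠ i), orth_ne (by omega : i-1 ≠ i)]
      ring
    · -- m ∉ {i-1, i, i+1}
      rw [orth_ne (by omega : i+1 ≠ m), orth_ne (by omega : i-1 ≠ m)]
      have hx : ∫ x in (-1:ℝ)..1, x * ((legendreP i).eval x * (legendreP m).eval x) = 0 := by
        rcases Nat.lt_or_ge m i with hlt | hge
        · -- m < i, m ≠ i-1 so m+1 < i; attach x to P_m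
          have : (X * legendreP m).natDegree < i := by
            refine lt_of_le_of_lt (natDegree_mul_le.trans ?_) (by omega : m + 1 < i)
            have := natDegree_legendreP_le m
            simp [natDegree_X_le]
            omega
          have h0 := orth_low (q := X * legendreP m) (n := i) this
          rw [intervalIntegral.integral_congr
              (f := fun x => x * ((legendreP i).eval x * (legendreP m).eval x))
              (g := fun x => (X * legendreP m).eval x * (legendreP i).eval x) (fun x _ => by
                simp only [eval_mul, eval_X]; ring)]
          exact h0
        · -- m > i+1; attach x to P_i
          have : (X * legendreP i).natDegree < m := by
            refine lt_of_le_of_lt (natDegree_mul_le.trans ?_) (by omega : i + 1 < m)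
            have := natDegree_legendreP_le i
            simp [natDegree_X_le]
            omega
          have h0 := orth_low (q := X * legendreP i) (n := m) this
          rw [intervalIntegral.integral_congr
              (f := fun x => x * ((legendreP i).eval x * (legendreP m).eval x))
              (g := fun x => (X * legendreP i).eval x * (legendreP m).eval x) (fun x _ => by
                simp only [eval_mul, eval_X]; ring)]
          exact h0
      rw [hx]
      ring
  -- R is in the span, hence R = 0
  have hmem := span_all R
  rw [Finsupp.mem_span_range_iff_exists_finsupp] at hmem
  obtain ⟨f, hf⟩ := hmem
  have hzero : ∀ m ∈ f.support, f m = 0 := by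
    intro m _
    have h1 := hRint m
    rw [← hf] at h1
    have hsum : ∀ x : ℝ, (f.sum fun k a => a • legendreP k).eval x * (legendreP m).eval x
        = ∑ k ∈ f.support, f k * ((legendreP k).eval x * (legendreP m).eval x) := by
      intro x
      rw [Finsupp.sum, Polynomial.eval_finset_sum, Finset.sum_mul]
      congr 1
      ext k
      simp [mul_assoc]
    rw [intervalIntegral.integral_congr (g := fun x =>
        ∑ k ∈ f.support, f k * ((legendreP k).eval x * (legendreP m).eval x))
      (fun x _ => hsum x)] at h1
    rw [intervalIntegral.integral_finset_sum (fun k _ =>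
      (continuous_const.fun_mul ((legendreP k).continuous.fun_mul (legendreP m).continuous)).intervalIntegrable _ _)] at h1
    simp_rw [intervalIntegral.integral_const_mul] at h1
    rw [Finset.sum_eq_single m] at h1
    · rw [norm_legendreP] at h1
      have : (0:ℝ) < 2 / (2*(m:ℝ)+1) := by positivity
      rcases mul_eq_zero.mp h1 with h | h
      · exact h
      · exact absurd h (ne_of_gt this)
    · intro k _ hk
      rw [orth_ne hk, mul_zero]
    · intro hm
      rw [Finsupp.notMem_support_iff.mp hm, zero_mul]
  have hR0 : R = 0 := by
    rw [← hf, Finsupp.sum]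
    apply Finset.sum_eq_zero
    intro m hm
    rw [hzero m hm, zero_smul]
  have hfin : X * legendreP i - (C (((i:ℝ)+1)/(2*(i:ℝ)+1)) * legendreP (i+1)
      + C ((i:ℝ)/(2*(i:ℝ)+1)) * legendreP (i-1)) = 0 := by
    calc X * legendreP i - (C (((i:ℝ)+1)/(2*(i:ℝ)+1)) * legendreP (i+1)
        + C ((i:ℝ)/(2*(i:ℝ)+1)) * legendreP (i-1)) = R := by rw [hR, ha, hb]; ring
      _ = 0 := hR0
  exact sub_eq_zero.mp hfin


lemma legP_one : legendreP 1 = X := by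
  simp [legendreP]
  rw [show (1 + 1 : ℝ[X]) = C 2 by rw [C_ofNat]; norm_num, ← mul_assoc, ← C_mul]
  norm_num

/-- evaluated Bonnet recurrence, cleared of denominators -/
lemma bonnet' (i : ℕ) (hi : 1 ≤ i) (x : ℝ) :
    (2*(i:ℝ)+1) * (x * (legendreP i).eval x)
      = ((i:ℝ)+1) * (legendreP (i+1)).eval x + (i:ℝ) * (legendreP (i-1)).eval x := by
  have h := congrArg (eval x) (bonnet i hi)
  simp only [eval_add, eval_mul, eval_C, eval_X] at h
  have h2 : (2*(i:ℝ)+1) ≠ 0 := by positivity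
  field_simp at h
  linear_combination h

noncomputable def T (i j k : ℕ) : ℝ :=
  ∫ t in (-1 : ℝ)..1, (legendreP i).eval t * (legendreP j).eval t * (legendreP k).eval t

lemma legProdCoeff_eq (c : ℕ → ℝ) (i j : ℕ) :
    legProdCoeff c i j = ∑ k ∈ Finset.range (i + j + 1),
      c k * ((2 * (i : ℝ) + 1) / 2) * T i j k := rfl

lemma trip_zero {a b k : ℕ} (h : a + b < k) : T a b k = 0 := by
  unfold T
  rw [intervalIntegral.integral_congr
    (f := fun t => (legendreP a).eval t * (legendreP b).eval t * (legendreP k).eval t)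
    (g := fun t => (legendreP a * legendreP b).eval t * (legendreP k).eval t)
    (fun t _ => by simp [eval_mul])]
  refine orth_low (lt_of_le_of_lt (natDegree_mul_le.trans ?_) h)
  exact add_le_add (natDegree_legendreP_le a) (natDegree_legendreP_le b)

lemma T_mid0 (i k : ℕ) :
    T i 0 k = ∫ t in (-1:ℝ)..1, (legendreP i).eval t * (legendreP k).eval t := by
  unfold T
  apply intervalIntegral.integral_congr
  intro t _
  simp [legP_zero]

lemma T_left0 (j k : ℕ) :
    T 0 j k = ∫ t in (-1:ℝ)..1, (legendreP j).eval t * (legendreP k).eval t := by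
  unfold T
  apply intervalIntegral.integral_congr
  intro t _
  simp [legP_zero]

lemma statement1 (c : ℕ → ℝ) (i : ℕ) : legProdCoeff c i 0 = c i := by
  rw [legProdCoeff_eq]
  rw [Finset.sum_eq_single i]
  · rw [T_mid0, norm_legendreP]
    have : (2*(i:ℝ)+1) ≠ 0 := by positivity
    field_simp
  · intro k _ hk
    rw [T_mid0, orth_ne (Ne.symm hk), mul_zero]
  · intro h
    exact absurd (Finset.self_mem_range_succ i) h

lemma statement2 (c : ℕ → ℝ) (j : ℕ) : legProdCoeff c 0 j = c j / (2 * (j : ℝ) + 1) := by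
  rw [legProdCoeff_eq]
  rw [show (0:ℕ) + j + 1 = j + 1 from by omega]
  rw [Finset.sum_eq_single j]
  · rw [T_left0, norm_legendreP]
    have : (2*(j:ℝ)+1) ≠ 0 := by positivity
    push_cast
    field_simp
    ring
  · intro k _ hk
    rw [T_left0, orth_ne (Ne.symm hk), mul_zero]
  · intro h
    exact absurd (Finset.self_mem_range_succ j) h

/-- key integral recurrence for the `x`-weighted pair integral -/
lemma pair_rec (i : ℕ) (hi : 1 ≤ i) (k : ℕ) :
    (2*(i:ℝ)+1) * T i 1 k
      = ((i:ℝ)+1) * (∫ t in (-1:ℝ)..1, (legendreP (i+1)).eval t * (legendreP k).eval t)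
        + (i:ℝ) * (∫ t in (-1:ℝ)..1, (legendreP (i-1)).eval t * (legendreP k).eval t) := by
  unfold T
  rw [← intervalIntegral.integral_const_mul, ← intervalIntegral.integral_const_mul,
    ← intervalIntegral.integral_const_mul]
  rw [← intervalIntegral.integral_add
    ((continuous_const.fun_mul ((legendreP (i+1)).continuous.fun_mul (legendreP k).continuous)).intervalIntegrable _ _)
    ((continuous_const.fun_mul ((legendreP (i-1)).continuous.fun_mul (legendreP k).continuous)).intervalIntegrable _ _)]
  apply intervalIntegral.integral_congr
  intro x _
  simp only [legP_one, eval_X]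
  have hb := bonnet' i hi x
  linear_combination ((legendreP k).eval x) * hb

lemma statement3 (c : ℕ → ℝ) (i : ℕ) (hi : 1 ≤ i) :
    legProdCoeff c i 1 =
      (((i : ℝ) + 1) / (2 * (i : ℝ) + 3)) * c (i + 1) +
        ((i : ℝ) / (2 * (i : ℝ) - 1)) * c (i - 1) := by
  have hc : ((i-1:ℕ):ℝ) = (i:ℝ) - 1 := by push_cast [Nat.cast_sub hi]; ring
  rw [legProdCoeff_eq]
  have step : ∀ k ∈ Finset.range (i + 1 + 1),
      c k * ((2 * (i : ℝ) + 1) / 2) * T i 1 k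
        = c k * (((i:ℝ)+1)/2) * (∫ t in (-1:ℝ)..1, (legendreP (i+1)).eval t * (legendreP k).eval t)
          + c k * ((i:ℝ)/2) * (∫ t in (-1:ℝ)..1, (legendreP (i-1)).eval t * (legendreP k).eval t) := by
    intro k _
    linear_combination (c k / 2) * pair_rec i hi k
  rw [Finset.sum_congr rfl step, Finset.sum_add_distrib]
  have h1 : ∑ k ∈ Finset.range (i + 1 + 1),
      c k * (((i:ℝ)+1)/2) * (∫ t in (-1:ℝ)..1, (legendreP (i+1)).eval t * (legendreP k).eval t)
        = (((i : ℝ) + 1) / (2 * (i : ℝ) + 3)) * c (i + 1) := by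
    rw [Finset.sum_eq_single (i+1)]
    · rw [norm_legendreP]
      have : (2*((i:ℝ)+1)+1) ≠ 0 := by positivity
      push_cast
      field_simp
      ring
    · intro k _ hk
      rw [orth_ne (Ne.symm hk), mul_zero]
    · intro h
      exact absurd (Finset.self_mem_range_succ (i+1)) h
  have h2 : ∑ k ∈ Finset.range (i + 1 + 1),
      c k * ((i:ℝ)/2) * (∫ t in (-1:ℝ)..1, (legendreP (i-1)).eval t * (legendreP k).eval t)
        = ((i : ℝ) / (2 * (i : ℝ) - 1)) * c (i - 1) := by
    rw [Finset.sum_eq_single (i-1)]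
    · rw [norm_legendreP, hc]
      have hge1 : (1:ℝ) ≤ (i:ℝ) := by exact_mod_cast hi
      have : (2*((i:ℝ)-1)+1) ≠ 0 := by nlinarith
      have h0 : (2*(i:ℝ)-1) ≠ 0 := by nlinarith
      field_simp
      rw [show (2*((i:ℝ)-1)+1) = 2*(i:ℝ)-1 by ring]
      field_simp
    · intro k _ hk
      rw [orth_ne (Ne.symm hk), mul_zero]
    · intro h
      exact absurd (by simp only [Finset.mem_range]; omega : i - 1 ∈ Finset.range (i+1+1)) h
  rw [h1, h2]

/-- cleared three-term step for triple products -/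
lemma Tstep (i j : ℕ) (hi : 1 ≤ i) (hj : 1 ≤ j) (k : ℕ) :
    ((j:ℝ)+1)*(2*(i:ℝ)+1) * T i (j+1) k
      = (2*(j:ℝ)+1)*((i:ℝ)+1) * T (i+1) j k + (2*(j:ℝ)+1)*(i:ℝ) * T (i-1) j k
        - (j:ℝ)*(2*(i:ℝ)+1) * T i (j-1) k := by
  unfold T
  rw [← intervalIntegral.integral_const_mul, ← intervalIntegral.integral_const_mul,
    ← intervalIntegral.integral_const_mul, ← intervalIntegral.integral_const_mul]
  rw [← intervalIntegral.integral_add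
    ((continuous_const.fun_mul (((legendreP (i+1)).continuous.fun_mul (legendreP j).continuous).fun_mul (legendreP k).continuous)).intervalIntegrable _ _)
    ((continuous_const.fun_mul (((legendreP (i-1)).continuous.fun_mul (legendreP j).continuous).fun_mul (legendreP k).continuous)).intervalIntegrable _ _)]
  rw [← intervalIntegral.integral_sub
    (((continuous_const.fun_mul (((legendreP (i+1)).continuous.fun_mul (legendreP j).continuous).fun_mul (legendreP k).continuous)).fun_add
      (continuous_const.fun_mul (((legendreP (i-1)).continuous.fun_mul (legendreP j).continuous).fun_mul (legendreP k).continuous))).intervalIntegrable _ _)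
    ((continuous_const.fun_mul (((legendreP i).continuous.fun_mul (legendreP (j-1)).continuous).fun_mul (legendreP k).continuous)).intervalIntegrable _ _)]
  apply intervalIntegral.integral_congr
  intro x _
  have hbj := bonnet' j hj x
  have hbi := bonnet' i hi x
  simp only
  linear_combination (-(2*(i:ℝ)+1) * (legendreP i).eval x * (legendreP k).eval x) * hbj
    + ((2*(j:ℝ)+1) * (legendreP j).eval x * (legendreP k).eval x) * hbi

lemma statement4 (c : ℕ → ℝ) (i j : ℕ) (hi : 1 ≤ i) (hj : 1 ≤ j) :
    legProdCoeff c i (j + 1) =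
      ((2 * (j : ℝ) + 1) / ((j : ℝ) + 1)) *
        ((((i : ℝ) + 1) / (2 * (i : ℝ) + 3)) * legProdCoeff c (i + 1) j +
          ((i : ℝ) / (2 * (i : ℝ) - 1)) * legProdCoeff c (i - 1) j) -
      ((j : ℝ) / ((j : ℝ) + 1)) * legProdCoeff c i (j - 1) := by
  have hci : ((i-1:ℕ):ℝ) = (i:ℝ) - 1 := by push_cast [Nat.cast_sub hi]; ring
  have hge1 : (1:ℝ) ≤ (i:ℝ) := by exact_mod_cast hi
  have hjge1 : (1:ℝ) ≤ (j:ℝ) := by exact_mod_cast hj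
  -- extend the two smaller sums to range (i+j+2)
  have hext1 : legProdCoeff c (i-1) j = ∑ k ∈ Finset.range (i+j+2),
      c k * ((2 * ((i-1:ℕ) : ℝ) + 1) / 2) * T (i-1) j k := by
    rw [legProdCoeff_eq]
    apply Finset.sum_subset
    · intro x hx
      simp only [Finset.mem_range] at hx ⊢
      omega
    · intro x _ hx
      simp only [Finset.mem_range] at hx
      rw [trip_zero (by omega : (i-1) + j < x), mul_zero]
  have hext2 : legProdCoeff c i (j-1) = ∑ k ∈ Finset.range (i+j+2),
      c k * ((2 * (i : ℝ) + 1) / 2) * T i (j-1) k := by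
    rw [legProdCoeff_eq]
    apply Finset.sum_subset
    · intro x hx
      simp only [Finset.mem_range] at hx ⊢
      omega
    · intro x _ hx
      simp only [Finset.mem_range] at hx
      rw [trip_zero (by omega : i + (j-1) < x), mul_zero]
  have hmain : legProdCoeff c (i+1) j = ∑ k ∈ Finset.range (i+j+2),
      c k * ((2 * ((i+1:ℕ) : ℝ) + 1) / 2) * T (i+1) j k := by
    rw [legProdCoeff_eq, show (i+1)+j+1 = i+j+2 from by omega]
  rw [hext1, hext2, hmain, legProdCoeff_eq, show i+(j+1)+1 = i+j+2 from by omega]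
  rw [Finset.mul_sum, Finset.mul_sum, Finset.mul_sum, ← Finset.sum_add_distrib,
    Finset.mul_sum, ← Finset.sum_sub_distrib]
  apply Finset.sum_congr rfl
  intro k _
  have hT := Tstep i j hi hj k
  have d1 : ((j:ℝ)+1) ≠ 0 := by positivity
  have d2 : (2*(i:ℝ)+3) ≠ 0 := by positivity
  have d3 : (2*(i:ℝ)-1) ≠ 0 := by nlinarith
  have d4 : (2*(i:ℝ)+1) ≠ 0 := by positivity
  have hT' : T i (j+1) k = (2*(j:ℝ)+1)/((j:ℝ)+1) * ( ((i:ℝ)+1)/(2*(i:ℝ)+1) * T (i+1) j k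
      + (i:ℝ)/(2*(i:ℝ)+1) * T (i-1) j k ) - (j:ℝ)/((j:ℝ)+1) * T i (j-1) k := by
    field_simp
    linear_combination hT
  rw [hci, hT']
  push_cast
  field_simp
  ring

end Leg

theorem legendre_product_coeff_recurrence (c : ℕ → ℝ) :
    (∀ i : ℕ, legProdCoeff c i 0 = c i) ∧
    (∀ j : ℕ, legProdCoeff c 0 j = c j / (2 * (j : ℝ) + 1)) ∧
    (∀ i : ℕ, 1 ≤ i →
      legProdCoeff c i 1 =
        (((i : ℝ) + 1) / (2 * (i : ℝ) + 3)) * c (i + 1) +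
          ((i : ℝ) / (2 * (i : ℝ) - 1)) * c (i - 1)) ∧
    (∀ i j : ℕ, 1 ≤ i → 1 ≤ j →
      legProdCoeff c i (j + 1) =
        ((2 * (j : ℝ) + 1) / ((j : ℝ) + 1)) *
          ((((i : ℝ) + 1) / (2 * (i : ℝ) + 3)) * legProdCoeff c (i + 1) j +
            ((i : ℝ) / (2 * (i : ℝ) - 1)) * legProdCoeff c (i - 1) j) -
        ((j : ℝ) / ((j : ℝ) + 1)) * legProdCoeff c i (j - 1)) :=
  ⟨Leg.statement1 c, Leg.statement2 c, fun i hi => Leg.statement3 c i hi,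
    fun i j hi hj => Leg.statement4 c i j hi hj⟩
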